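/- Fix d ≥ 1, n ≥ 1, p ∈ [1, ∞), indices k, l, k', l' ∈ S = {1, …, n}, and a nonnegative symmetric kernel Φ ∈ L¹(𝕋^d) ∩ L^∞(𝕋^d). For ρ ∈ L¹(Π,m) ∩ L^p(Π,m) write u_ξ(x) = ρ(x,ξ) and define T̄⁺(ρ)(x,ξ) = 1{ξ=k'} (Φ*u_l)(x) u_k(x) + 1{ξ=l'} (Φ*u_k)(x) u_l(x), and let ‖ρ‖_{X_p} = ‖ρ‖_{L¹(Π)} + ‖ρ‖_{L^p(Π)}. Then for all ρ, ρ̂ ∈ L¹(Π,m) ∩ L^p(Π,m), ‖T̄⁺(ρ) − T̄⁺(ρ̂)‖_{X_p} ≤ 4 ‖Φ‖_{L^∞(𝕋^d)} · max{ ‖ρ‖_{X_p}, ‖ρ̂‖_{X_p} } · ‖ρ − ρ̂‖_{X_p}. -/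

import Mathlib

open MeasureTheory
open scoped ENNReal

/-- The `d`-dimensional torus `𝕋^d`. -/
abbrev Torus (d : ℕ) := Fin d → UnitAddCircle

/-- Convolution on the torus: `(Φ*u)(x) = ∫ Φ(x−y) u(y) dy`. -/
noncomputable def conv (d : ℕ) (Φ u : Torus d → ℝ) (x : Torus d) : ℝ :=
  ∫ y, Φ (x - y) * u y

/-- The measure `m` on `Π = 𝕋^d × S`: Lebesgue measure times counting measure. -/
noncomputable def mPi (d n : ℕ) : Measure (Torus d × Fin n) :=
  (volume : Measure (Torus d)).prod (Measure.count : Measure (Fin n))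

/-- `T̄⁺(ρ)(x,ξ) = 1{ξ=k'}(Φ*u_l)(x)u_k(x) + 1{ξ=l'}(Φ*u_k)(x)u_l(x)`. -/
noncomputable def Tplus (d n : ℕ) (k l k' l' : Fin n) (Φ : Torus d → ℝ)
    (ρ : Torus d × Fin n → ℝ) (y : Torus d × Fin n) : ℝ :=
  (if y.2 = k' then conv d Φ (fun z => ρ (z, l)) y.1 * ρ (y.1, k) else 0) +
    (if y.2 = l' then conv d Φ (fun z => ρ (z, k)) y.1 * ρ (y.1, l) else 0)

/-- The `X_p`-norm `‖g‖_{X_p} = ‖g‖_{L¹(Π)} + ‖g‖_{L^p(Π)}` (with values in `[0,∞]`). -/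
noncomputable def XpNorm (d n : ℕ) (p : ℝ) (g : Torus d × Fin n → ℝ) : ℝ≥0∞ :=
  eLpNorm g 1 (mPi d n) + eLpNorm g (ENNReal.ofReal p) (mPi d n)

/-- local Lipschitz bound for `T̄⁺` in the `X_p`-norm. -/

instance (d : ℕ) : (volume : Measure (Torus d)).IsNegInvariant :=
  MeasureTheory.Pi.isNegInvariant_volume
instance (d : ℕ) : (volume : Measure (Torus d)).IsAddLeftInvariant :=
  MeasureTheory.Pi.isAddLeftInvariant_volume

lemma lintegral_mPi {d n : ℕ} (f : Torus d × Fin n → ℝ≥0∞) (hf : Measurable f) :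
    ∫⁻ y, f y ∂(mPi d n) = ∑ ξ : Fin n, ∫⁻ x, f (x, ξ) := by
  rw [mPi, MeasureTheory.lintegral_prod _ hf.aemeasurable]
  simp_rw [lintegral_count, tsum_fintype]
  rw [lintegral_finset_sum]
  intro ξ _
  exact hf.comp (measurable_id.prodMk measurable_const)

lemma eLpNorm_section {d n : ℕ} (q : ℝ≥0∞) (hq0 : q ≠ 0) (hqt : q ≠ ⊤)
    (c : Fin n) (f : Torus d → ℝ) (hf : Measurable f) :
    eLpNorm (fun y : Torus d × Fin n => if y.2 = c then f y.1 else 0) q (mPi d n)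
      = eLpNorm f q volume := by
  have hr : 0 < q.toReal := ENNReal.toReal_pos hq0 hqt
  have hFm : Measurable (fun y : Torus d × Fin n => if y.2 = c then f y.1 else 0) :=
    Measurable.ite (measurable_snd (measurableSet_singleton c)) (hf.comp measurable_fst)
      measurable_const
  rw [eLpNorm_eq_lintegral_rpow_enorm_toReal hq0 hqt, eLpNorm_eq_lintegral_rpow_enorm_toReal hq0 hqt]
  congr 1
  rw [lintegral_mPi _ (hFm.enorm.pow measurable_const)]
  have h1 : ∀ ξ : Fin n, (∫⁻ x, ‖if ξ = c then f x else 0‖ₑ ^ q.toReal)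
      = if ξ = c then ∫⁻ x, ‖f x‖ₑ ^ q.toReal else 0 := by
    intro ξ
    by_cases h : ξ = c <;> simp [h, ENNReal.zero_rpow_of_pos hr]
  simp_rw [h1, Finset.sum_ite_eq' Finset.univ c, Finset.mem_univ, if_true]

lemma eLpNorm_slice_le {d n : ℕ} (q : ℝ≥0∞) (hq0 : q ≠ 0) (hqt : q ≠ ⊤)
    (c : Fin n) (ρ : Torus d × Fin n → ℝ) (hρ : Measurable ρ) :
    eLpNorm (fun x => ρ (x, c)) q volume ≤ eLpNorm ρ q (mPi d n) := by
  rw [eLpNorm_eq_lintegral_rpow_enorm_toReal hq0 hqt, eLpNorm_eq_lintegral_rpow_enorm_toReal hq0 hqt]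
  refine ENNReal.rpow_le_rpow ?_ (by positivity)
  rw [lintegral_mPi _ (hρ.enorm.pow measurable_const)]
  exact Finset.single_le_sum (f := fun ξ => ∫⁻ x, (‖ρ (x, ξ)‖₊ : ℝ≥0∞) ^ q.toReal)
    (fun _ _ => zero_le) (Finset.mem_univ c)

lemma ae_nnnorm_sub_le {d : ℕ} (Φ : Torus d → ℝ) (x : Torus d) :
    ∀ᵐ y : Torus d, (‖Φ (x - y)‖₊ : ℝ≥0∞) ≤ eLpNorm Φ ⊤ volume := by
  set C := eLpNorm Φ ⊤ volume with hC
  have h1 : ∀ᵐ z : Torus d, (‖Φ z‖₊ : ℝ≥0∞) ≤ C := by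
    rw [hC, eLpNorm_exponent_top]; exact ae_le_eLpNormEssSup
  have hmp := Measure.measurePreserving_sub_left (volume : Measure (Torus d)) x
  exact hmp.quasiMeasurePreserving.ae h1

lemma conv_measurable {d : ℕ} (Φ v : Torus d → ℝ) (hΦ : Measurable Φ) (hv : Measurable v) :
    Measurable (conv d Φ v) := by
  have : StronglyMeasurable (fun z : Torus d × Torus d => Φ (z.1 - z.2) * v z.2) :=
    ((hΦ.comp (measurable_fst.sub measurable_snd)).mul (hv.comp measurable_snd)).stronglyMeasurable
  exact (this.integral_prod_right' (ν := volume)).measurable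

lemma conv_nnnorm_le {d : ℕ} (Φ v : Torus d → ℝ) (hv : Measurable v) (x : Torus d) :
    (‖conv d Φ v x‖₊ : ℝ≥0∞) ≤ eLpNorm Φ ⊤ volume * eLpNorm v 1 volume := by
  refine le_trans (enorm_integral_le_lintegral_enorm _) ?_
  rw [eLpNorm_one_eq_lintegral_enorm]
  calc ∫⁻ y, (‖Φ (x - y) * v y‖₊ : ℝ≥0∞)
      ≤ ∫⁻ y, eLpNorm Φ ⊤ volume * (‖v y‖₊ : ℝ≥0∞) := by
        refine lintegral_mono_ae ?_
        filter_upwards [ae_nnnorm_sub_le Φ x] with y hy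
        rw [nnnorm_mul, ENNReal.coe_mul]
        exact mul_le_mul_left hy _
    _ = eLpNorm Φ ⊤ volume * ∫⁻ y, (‖v y‖₊ : ℝ≥0∞) :=
        lintegral_const_mul _ hv.enorm

lemma eLpNorm_mul_le_of_bdd {d : ℕ} (q : ℝ≥0∞) (hq0 : q ≠ 0) (hqt : q ≠ ⊤)
    (g w : Torus d → ℝ) (C : ℝ≥0∞) (hCt : C ≠ ⊤) (hg : ∀ x, (‖g x‖₊ : ℝ≥0∞) ≤ C) :
    eLpNorm (fun x => g x * w x) q volume ≤ C * eLpNorm w q volume := by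
  have hr : 0 < q.toReal := ENNReal.toReal_pos hq0 hqt
  rw [eLpNorm_eq_lintegral_rpow_enorm_toReal hq0 hqt, eLpNorm_eq_lintegral_rpow_enorm_toReal hq0 hqt]
  calc (∫⁻ x, (‖g x * w x‖₊ : ℝ≥0∞) ^ q.toReal) ^ (1 / q.toReal)
      ≤ (∫⁻ x, (C * ‖w x‖₊) ^ q.toReal) ^ (1 / q.toReal) := by
        refine ENNReal.rpow_le_rpow (lintegral_mono fun x => ?_) (by positivity)
        refine ENNReal.rpow_le_rpow ?_ hr.le
        rw [nnnorm_mul, ENNReal.coe_mul]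
        exact mul_le_mul_left (hg x) _
    _ = C * (∫⁻ x, (‖w x‖₊ : ℝ≥0∞) ^ q.toReal) ^ (1 / q.toReal) := by
        simp_rw [ENNReal.mul_rpow_of_nonneg _ _ hr.le]
        rw [lintegral_const_mul' _ _ (by simp [ENNReal.rpow_eq_top_iff, hCt, hr, hr.not_gt]),
          ENNReal.mul_rpow_of_nonneg _ _ (by positivity : (0:ℝ) ≤ 1 / q.toReal),
          ← ENNReal.rpow_mul, mul_one_div, div_self hr.ne', ENNReal.rpow_one]

lemma term_bound {d n : ℕ} (q : ℝ≥0∞) (hq0 : q ≠ 0) (hqt : q ≠ ⊤) (c : Fin n)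
    (Φ v w : Torus d → ℝ) (hΦmeas : Measurable Φ) (hΦLinf : eLpNorm Φ ⊤ volume ≠ ⊤)
    (hv : Measurable v) (hw : Measurable w) (hv1 : eLpNorm v 1 volume ≠ ⊤) :
    eLpNorm (fun y : Torus d × Fin n => if y.2 = c then conv d Φ v y.1 * w y.1 else 0) q (mPi d n)
      ≤ eLpNorm Φ ⊤ volume * eLpNorm v 1 volume * eLpNorm w q volume := by
  rw [eLpNorm_section q hq0 hqt c (fun x => conv d Φ v x * w x) ((conv_measurable Φ v hΦmeas hv).mul hw)]
  exact eLpNorm_mul_le_of_bdd q hq0 hqt _ w _ (ENNReal.mul_ne_top hΦLinf hv1)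
    (conv_nnnorm_le Φ v hv)

lemma integrable_kernel_mul {d : ℕ} (Φ u : Torus d → ℝ) (hΦmeas : Measurable Φ)
    (hΦLinf : eLpNorm Φ ⊤ volume ≠ ⊤) (hu : Integrable u volume) (x : Torus d) :
    Integrable (fun y => Φ (x - y) * u y) volume := by
  refine hu.bdd_mul (c := (eLpNorm Φ ⊤ volume).toReal)
    ((hΦmeas.comp (measurable_const.sub measurable_id)).aestronglyMeasurable) ?_
  filter_upwards [ae_nnnorm_sub_le Φ x] with y hy
  have := ENNReal.toReal_mono hΦLinf hy
  simpa using this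

lemma slice_integrable {d n : ℕ} (ρ : Torus d × Fin n → ℝ) (hρmeas : Measurable ρ)
    (h1 : MemLp ρ 1 (mPi d n)) (c : Fin n) : Integrable (fun x => ρ (x, c)) volume := by
  rw [← memLp_one_iff_integrable]
  refine ⟨(hρmeas.comp (measurable_id.prodMk measurable_const)).aestronglyMeasurable, ?_⟩
  exact lt_of_le_of_lt (eLpNorm_slice_le 1 one_ne_zero ENNReal.one_ne_top c ρ hρmeas) h1.2
set_option maxHeartbeats 1000000 in
theorem stmt_18 (d n : ℕ) (hd : 1 ≤ d) (hn : 1 ≤ n)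
    (p : ℝ) (hp : 1 ≤ p) (k l k' l' : Fin n)
    (Φ : Torus d → ℝ) (hΦmeas : Measurable Φ) (hΦnonneg : ∀ x, 0 ≤ Φ x)
    (hΦsymm : ∀ x, Φ (-x) = Φ x)
    (hΦL1 : Integrable Φ volume) (hΦLinf : eLpNorm Φ ⊤ volume ≠ ⊤)
    (ρ ρhat : Torus d × Fin n → ℝ) (hρmeas : Measurable ρ) (hρhatmeas : Measurable ρhat)
    (hρL1 : MemLp ρ 1 (mPi d n)) (hρLp : MemLp ρ (ENNReal.ofReal p) (mPi d n))
    (hρhatL1 : MemLp ρhat 1 (mPi d n))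
    (hρhatLp : MemLp ρhat (ENNReal.ofReal p) (mPi d n)) :
    XpNorm d n p
        (fun y => Tplus d n k l k' l' Φ ρ y - Tplus d n k l k' l' Φ ρhat y)
      ≤ 4 * eLpNorm Φ ⊤ volume *
          max (XpNorm d n p ρ) (XpNorm d n p ρhat) *
          XpNorm d n p (fun y => ρ y - ρhat y) := by
  classical
  set μ := mPi d n with hμ
  set CΦ := eLpNorm Φ ⊤ volume with hCΦ
  set P := ENNReal.ofReal p with hPdef
  have hP0 : P ≠ 0 := by
    rw [hPdef]
    exact (ENNReal.ofReal_pos.mpr (by linarith)).ne'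
  have hPt : P ≠ ⊤ := ENNReal.ofReal_ne_top
  have hP1 : 1 ≤ P := by
    rw [hPdef, ← ENNReal.ofReal_one]
    exact ENNReal.ofReal_le_ofReal hp
  set δ : Torus d × Fin n → ℝ := fun y => ρ y - ρhat y with hδdef
  have hδmeas : Measurable δ := hρmeas.sub hρhatmeas
  have hδL1 : MemLp δ 1 μ := hρL1.sub hρhatL1
  have hδLp : MemLp δ P μ := hρLp.sub hρhatLp
  -- slice 1-norms are finite
  have hfin : ∀ (σ : Torus d × Fin n → ℝ), Measurable σ → MemLp σ 1 μ → ∀ c : Fin n,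
      eLpNorm (fun x => σ (x, c)) 1 volume ≠ ⊤ := fun σ hm h1 c =>
    (lt_of_le_of_lt (eLpNorm_slice_le 1 one_ne_zero ENNReal.one_ne_top c σ hm) h1.2).ne
  -- linearity of convolution in the slices
  have hconvsub : ∀ (c : Fin n) (x : Torus d),
      conv d Φ (fun z => δ (z, c)) x
        = conv d Φ (fun z => ρ (z, c)) x - conv d Φ (fun z => ρhat (z, c)) x := by
    intro c x
    rw [conv, conv, conv,
      ← integral_sub (integrable_kernel_mul Φ _ hΦmeas hΦLinf
          (slice_integrable ρ hρmeas hρL1 c) x)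
        (integrable_kernel_mul Φ _ hΦmeas hΦLinf
          (slice_integrable ρhat hρhatmeas hρhatL1 c) x)]
    congr 1
    funext y
    simp [hδdef, mul_sub]
  -- pointwise decomposition of the difference
  have hfun : (fun y => Tplus d n k l k' l' Φ ρ y - Tplus d n k l k' l' Φ ρhat y)
      = fun y : Torus d × Fin n =>
        (((if y.2 = k' then conv d Φ (fun z => δ (z, l)) y.1 * ρ (y.1, k) else 0)
          + (if y.2 = k' then conv d Φ (fun z => ρhat (z, l)) y.1 * δ (y.1, k) else 0))
        + ((if y.2 = l' then conv d Φ (fun z => δ (z, k)) y.1 * ρ (y.1, l) else 0)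
          + (if y.2 = l' then conv d Φ (fun z => ρhat (z, k)) y.1 * δ (y.1, l) else 0))) := by
    funext y
    have h3 := hconvsub l y.1
    have h4 := hconvsub k y.1
    simp only [Tplus]
    split_ifs <;> (try simp only [h3, h4]) <;> (try simp only [hδdef]) <;> ring
  -- measurability of the four pieces
  have hterm_meas : ∀ (c : Fin n) (v w : Torus d → ℝ), Measurable v → Measurable w →
      AEStronglyMeasurable
        (fun y : Torus d × Fin n => if y.2 = c then conv d Φ v y.1 * w y.1 else 0) μ :=
    fun c v w hv hw =>
      (Measurable.ite (measurable_snd (measurableSet_singleton c))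
        (((conv_measurable Φ v hΦmeas hv).comp measurable_fst).mul (hw.comp measurable_fst))
        measurable_const).aestronglyMeasurable
  have hρlm : Measurable fun z : Torus d => ρ (z, l) :=
    hρmeas.comp (measurable_id.prodMk measurable_const)
  have hρkm : Measurable fun z : Torus d => ρ (z, k) :=
    hρmeas.comp (measurable_id.prodMk measurable_const)
  have hρhlm : Measurable fun z : Torus d => ρhat (z, l) :=
    hρhatmeas.comp (measurable_id.prodMk measurable_const)
  have hρhkm : Measurable fun z : Torus d => ρhat (z, k) :=
    hρhatmeas.comp (measurable_id.prodMk measurable_const)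
  have hδlm : Measurable fun z : Torus d => δ (z, l) :=
    hδmeas.comp (measurable_id.prodMk measurable_const)
  have hδkm : Measurable fun z : Torus d => δ (z, k) :=
    hδmeas.comp (measurable_id.prodMk measurable_const)
  -- the key bound for a single exponent q
  have key : ∀ q : ℝ≥0∞, q ≠ 0 → q ≠ ⊤ → 1 ≤ q →
      eLpNorm (fun y => Tplus d n k l k' l' Φ ρ y - Tplus d n k l k' l' Φ ρhat y) q μ
        ≤ 2 * CΦ * (eLpNorm δ 1 μ * eLpNorm ρ q μ + eLpNorm ρhat 1 μ * eLpNorm δ q μ) := by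
    intro q hq0 hqt hq1
    rw [hfun]
    have t1 : eLpNorm (fun y : Torus d × Fin n =>
        if y.2 = k' then conv d Φ (fun z => δ (z, l)) y.1 * ρ (y.1, k) else 0) q μ
        ≤ CΦ * (eLpNorm δ 1 μ * eLpNorm ρ q μ) := by
      refine le_trans (term_bound q hq0 hqt k' Φ (fun z => δ (z, l)) (fun z => ρ (z, k)) hΦmeas hΦLinf hδlm hρkm
        (hfin δ hδmeas hδL1 l)) ?_
      rw [mul_assoc]
      gcongr
      · exact eLpNorm_slice_le 1 one_ne_zero ENNReal.one_ne_top l δ hδmeas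
      · exact eLpNorm_slice_le q hq0 hqt k ρ hρmeas
    have t2 : eLpNorm (fun y : Torus d × Fin n =>
        if y.2 = k' then conv d Φ (fun z => ρhat (z, l)) y.1 * δ (y.1, k) else 0) q μ
        ≤ CΦ * (eLpNorm ρhat 1 μ * eLpNorm δ q μ) := by
      refine le_trans (term_bound q hq0 hqt k' Φ (fun z => ρhat (z, l)) (fun z => δ (z, k)) hΦmeas hΦLinf hρhlm hδkm
        (hfin ρhat hρhatmeas hρhatL1 l)) ?_
      rw [mul_assoc]
      gcongr
      · exact eLpNorm_slice_le 1 one_ne_zero ENNReal.one_ne_top l ρhat hρhatmeas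
      · exact eLpNorm_slice_le q hq0 hqt k δ hδmeas
    have t3 : eLpNorm (fun y : Torus d × Fin n =>
        if y.2 = l' then conv d Φ (fun z => δ (z, k)) y.1 * ρ (y.1, l) else 0) q μ
        ≤ CΦ * (eLpNorm δ 1 μ * eLpNorm ρ q μ) := by
      refine le_trans (term_bound q hq0 hqt l' Φ (fun z => δ (z, k)) (fun z => ρ (z, l)) hΦmeas hΦLinf hδkm hρlm
        (hfin δ hδmeas hδL1 k)) ?_
      rw [mul_assoc]
      gcongr
      · exact eLpNorm_slice_le 1 one_ne_zero ENNReal.one_ne_top k δ hδmeas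
      · exact eLpNorm_slice_le q hq0 hqt l ρ hρmeas
    have t4 : eLpNorm (fun y : Torus d × Fin n =>
        if y.2 = l' then conv d Φ (fun z => ρhat (z, k)) y.1 * δ (y.1, l) else 0) q μ
        ≤ CΦ * (eLpNorm ρhat 1 μ * eLpNorm δ q μ) := by
      refine le_trans (term_bound q hq0 hqt l' Φ (fun z => ρhat (z, k)) (fun z => δ (z, l)) hΦmeas hΦLinf hρhkm hδlm
        (hfin ρhat hρhatmeas hρhatL1 k)) ?_
      rw [mul_assoc]
      gcongr
      · exact eLpNorm_slice_le 1 one_ne_zero ENNReal.one_ne_top k ρhat hρhatmeas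
      · exact eLpNorm_slice_le q hq0 hqt l δ hδmeas
    have m1 := hterm_meas k' (fun z => δ (z, l)) (fun z => ρ (z, k)) hδlm hρkm
    have m2 := hterm_meas k' (fun z => ρhat (z, l)) (fun z => δ (z, k)) hρhlm hδkm
    have m3 := hterm_meas l' (fun z => δ (z, k)) (fun z => ρ (z, l)) hδkm hρlm
    have m4 := hterm_meas l' (fun z => ρhat (z, k)) (fun z => δ (z, l)) hρhkm hδlm
    calc eLpNorm (fun y : Torus d × Fin n =>
            (((if y.2 = k' then conv d Φ (fun z => δ (z, l)) y.1 * ρ (y.1, k) else 0)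
              + (if y.2 = k' then conv d Φ (fun z => ρhat (z, l)) y.1 * δ (y.1, k) else 0))
            + ((if y.2 = l' then conv d Φ (fun z => δ (z, k)) y.1 * ρ (y.1, l) else 0)
              + (if y.2 = l' then conv d Φ (fun z => ρhat (z, k)) y.1 * δ (y.1, l) else 0)))) q μ
        ≤ eLpNorm (fun y : Torus d × Fin n =>
            (if y.2 = k' then conv d Φ (fun z => δ (z, l)) y.1 * ρ (y.1, k) else 0)
            + (if y.2 = k' then conv d Φ (fun z => ρhat (z, l)) y.1 * δ (y.1, k) else 0)) q μ
          + eLpNorm (fun y : Torus d × Fin n =>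
            (if y.2 = l' then conv d Φ (fun z => δ (z, k)) y.1 * ρ (y.1, l) else 0)
            + (if y.2 = l' then conv d Φ (fun z => ρhat (z, k)) y.1 * δ (y.1, l) else 0)) q μ :=
          eLpNorm_add_le (m1.add m2) (m3.add m4) hq1
      _ ≤ (eLpNorm (fun y : Torus d × Fin n =>
            if y.2 = k' then conv d Φ (fun z => δ (z, l)) y.1 * ρ (y.1, k) else 0) q μ
          + eLpNorm (fun y : Torus d × Fin n =>
            if y.2 = k' then conv d Φ (fun z => ρhat (z, l)) y.1 * δ (y.1, k) else 0) q μ)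
          + (eLpNorm (fun y : Torus d × Fin n =>
            if y.2 = l' then conv d Φ (fun z => δ (z, k)) y.1 * ρ (y.1, l) else 0) q μ
          + eLpNorm (fun y : Torus d × Fin n =>
            if y.2 = l' then conv d Φ (fun z => ρhat (z, k)) y.1 * δ (y.1, l) else 0) q μ) :=
          add_le_add (eLpNorm_add_le m1 m2 hq1) (eLpNorm_add_le m3 m4 hq1)
      _ ≤ (CΦ * (eLpNorm δ 1 μ * eLpNorm ρ q μ) + CΦ * (eLpNorm ρhat 1 μ * eLpNorm δ q μ))
          + (CΦ * (eLpNorm δ 1 μ * eLpNorm ρ q μ) + CΦ * (eLpNorm ρhat 1 μ * eLpNorm δ q μ)) :=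
          add_le_add (add_le_add t1 t2) (add_le_add t3 t4)
      _ = 2 * CΦ * (eLpNorm δ 1 μ * eLpNorm ρ q μ + eLpNorm ρhat 1 μ * eLpNorm δ q μ) := by
          ring
  have k1 := key 1 one_ne_zero ENNReal.one_ne_top le_rfl
  have kP := key P hP0 hPt hP1
  have hXδ : XpNorm d n p δ = eLpNorm δ 1 μ + eLpNorm δ P μ := rfl
  have hXρ : XpNorm d n p ρ = eLpNorm ρ 1 μ + eLpNorm ρ P μ := rfl
  have hXρh : XpNorm d n p ρhat = eLpNorm ρhat 1 μ + eLpNorm ρhat P μ := rfl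
  set M := max (XpNorm d n p ρ) (XpNorm d n p ρhat) with hM
  have hδ1_le : eLpNorm δ 1 μ ≤ XpNorm d n p δ := by rw [hXδ]; exact le_self_add
  have hρ_le : eLpNorm ρ 1 μ + eLpNorm ρ P μ ≤ M := le_max_of_le_left (le_of_eq hXρ.symm)
  have hρh1_le : eLpNorm ρhat 1 μ ≤ M :=
    le_trans (by rw [hXρh]; exact le_self_add) (le_max_right _ _)
  calc XpNorm d n p (fun y => Tplus d n k l k' l' Φ ρ y - Tplus d n k l k' l' Φ ρhat y)
      = eLpNorm (fun y => Tplus d n k l k' l' Φ ρ y - Tplus d n k l k' l' Φ ρhat y) 1 μ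
        + eLpNorm (fun y => Tplus d n k l k' l' Φ ρ y - Tplus d n k l k' l' Φ ρhat y) P μ := rfl
    _ ≤ 2 * CΦ * (eLpNorm δ 1 μ * eLpNorm ρ 1 μ + eLpNorm ρhat 1 μ * eLpNorm δ 1 μ)
        + 2 * CΦ * (eLpNorm δ 1 μ * eLpNorm ρ P μ + eLpNorm ρhat 1 μ * eLpNorm δ P μ) :=
        add_le_add k1 kP
    _ = 2 * CΦ * (eLpNorm δ 1 μ * (eLpNorm ρ 1 μ + eLpNorm ρ P μ)
          + eLpNorm ρhat 1 μ * (eLpNorm δ 1 μ + eLpNorm δ P μ)) := by ring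
    _ ≤ 2 * CΦ * (XpNorm d n p δ * M + M * (eLpNorm δ 1 μ + eLpNorm δ P μ)) := by
        gcongr
    _ = 4 * CΦ * M * XpNorm d n p δ := by rw [hXδ]; ring
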